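/- Let G be a finite group, G₀ a normal subgroup such that G/G₀ is cyclic, and suppose |G| = e·f where e = |G₀|. Write f = pʳ·f₀ with p prime, p ∤ e and p ∤ f₀. Then the kernel C of the map G → G/G₀ given by g ↦ g^{f₀}G₀ is a normal subgroup of G containing G₀, of order e·f₀ and index pʳ, and every complement of C in G is a Sylow p-subgroup of G; in particular C has a complement in G (by Schur–Zassenhaus) and any subgroup of G of order pʳ is a complement of C. -/

import Mathlib

/-- Schur–Zassenhaus style complement to the kernel of
`g ↦ g^{f₀} G₀` in a finite group with cyclic quotient `G/G₀`. -/
theorem stmt0 {G : Type*} [Group G] [Finite G] (G₀ : Subgroup G) [G₀.Normal]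
    (hcyc : IsCyclic (G ⧸ G₀)) (e f p r f₀ : ℕ) (hp : p.Prime)
    (he : e = Nat.card G₀) (hef : Nat.card G = e * f) (hf : f = p ^ r * f₀)
    (hpe : ¬ p ∣ e) (hpf₀ : ¬ p ∣ f₀)
    (C : Subgroup G) (hC : ∀ g : G, g ∈ C ↔ ((g : G ⧸ G₀)) ^ f₀ = 1) :
    C.Normal ∧ G₀ ≤ C ∧ Nat.card C = e * f₀ ∧ C.index = p ^ r ∧
    (∀ P : Subgroup G, C.IsComplement' P → ∃ Q : Sylow p G, (Q : Subgroup G) = P) ∧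
    (∃ P : Subgroup G, C.IsComplement' P) ∧
    (∀ P : Subgroup G, Nat.card P = p ^ r → C.IsComplement' P) := by
  classical
  haveI := hcyc
  haveI : Fact p.Prime := ⟨hp⟩
  set Q := G ⧸ G₀
  haveI : Fintype Q := Fintype.ofFinite Q
  have hGpos : 0 < Nat.card G := Nat.card_pos
  have hepos : 0 < e := by rw [he]; exact Nat.card_pos
  have hfpos : 0 < f := by
    rcases Nat.eq_zero_or_pos f with h | h
    · rw [h, mul_zero] at hef; omega
    · exact h
  have hf₀pos : 0 < f₀ := by
    rcases Nat.eq_zero_or_pos f₀ with h | h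
    · rw [h, mul_zero] at hf; omega
    · exact h
  have hppos : 0 < p ^ r := Nat.pow_pos hp.pos
  -- card of the quotient
  have hQcard : Nat.card Q = f := by
    have h1 : Nat.card G₀ * G₀.index = Nat.card G := G₀.card_mul_index
    have h2 : G₀.index = Nat.card Q := rfl
    rw [h2, ← he, hef] at h1
    exact Nat.eq_of_mul_eq_mul_left hepos h1
  letI : CommGroup Q := IsCyclic.commGroup
  -- the subgroup of f₀-th roots of unity in Q
  set D : Subgroup Q := (powMonoidHom f₀ : Q →* Q).ker with hD
  have hmemD : ∀ x : Q, x ∈ D ↔ x ^ f₀ = 1 := fun x => Iff.rfl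
  set π : G →* Q := QuotientGroup.mk' G₀
  have hπsurj : Function.Surjective π := QuotientGroup.mk'_surjective G₀
  have hCD : C = D.comap π := by
    ext g
    rw [hC g, Subgroup.mem_comap, hmemD]
    rfl
  -- card D = f₀
  have hDle : Nat.card D ≤ f₀ := by
    have h := IsCyclic.card_pow_eq_one_le (α := Q) hf₀pos
    calc Nat.card D = Fintype.card D := Nat.card_eq_fintype_card
      _ = (Finset.univ.filter fun a : Q => a ^ f₀ = 1).card := by
          rw [← Fintype.card_subtype]
          apply Fintype.card_congr
          exact Equiv.subtypeEquivRight fun x => hmemD x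
      _ ≤ f₀ := by simpa using h
  obtain ⟨g, hg⟩ := hcyc.exists_generator
  have hordg : orderOf g = f := by
    rw [orderOf_eq_card_of_forall_mem_zpowers hg, Nat.card_eq_fintype_card, ← hQcard,
      Nat.card_eq_fintype_card]
  have hordy : orderOf (g ^ (p ^ r)) = f₀ := by
    rw [orderOf_pow, hordg, hf, Nat.gcd_eq_right ⟨f₀, rfl⟩, Nat.mul_div_cancel_left _ hppos]
  have hyD : Subgroup.zpowers (g ^ (p ^ r)) ≤ D := by
    rw [Subgroup.zpowers_le, hmemD, ← pow_mul, ← hf, ← hordg, pow_orderOf_eq_one]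
  have hDge : f₀ ≤ Nat.card D := by
    calc f₀ = Nat.card (Subgroup.zpowers (g ^ (p ^ r))) := by
          rw [Nat.card_zpowers, hordy]
      _ ≤ Nat.card D := Subgroup.card_le_of_le hyD
  have hDcard : Nat.card D = f₀ := le_antisymm hDle hDge
  -- index of D in Q
  have hDindex : D.index = p ^ r := by
    have h1 : Nat.card D * D.index = Nat.card Q := D.card_mul_index
    rw [hDcard, hQcard, hf, mul_comm (p ^ r) f₀] at h1
    exact (Nat.eq_of_mul_eq_mul_left hf₀pos h1)
  have hCindex : C.index = p ^ r := by
    rw [hCD, D.index_comap_of_surjective hπsurj, hDindex]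
  have hCcard : Nat.card C = e * f₀ := by
    have h1 : Nat.card C * C.index = Nat.card G := C.card_mul_index
    rw [hCindex, hef, hf] at h1
    refine Nat.eq_of_mul_eq_mul_right hppos ?_
    rw [h1]; ring
  have hCnormal : C.Normal := by
    rw [hCD]
    exact Subgroup.Normal.comap inferInstance π
  have hG₀C : G₀ ≤ C := by
    intro x hx
    rw [hC]
    have : (x : Q) = 1 := (QuotientGroup.eq_one_iff x).mpr hx
    rw [this, one_pow]
  -- coprimality
  have hpef₀ : ¬ p ∣ e * f₀ := by
    intro h
    rcases (Nat.Prime.dvd_mul hp).mp h with h | h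
    exacts [hpe h, hpf₀ h]
  have hcop : Nat.Coprime (e * f₀) (p ^ r) :=
    Nat.Coprime.pow_right r (((Nat.Prime.coprime_iff_not_dvd hp).mpr hpef₀).symm)
  -- factorization of |G| at p
  have hfact : (Nat.card G).factorization p = r := by
    rw [hef, hf, show e * (p ^ r * f₀) = p ^ r * (e * f₀) by ring, Nat.factorization_mul
      (pow_ne_zero r hp.pos.ne') (by positivity), Nat.Prime.factorization_pow hp]
    simp [Nat.factorization_eq_zero_of_not_dvd hpef₀]
  -- complements
  have hcomp_card : ∀ P : Subgroup G, C.IsComplement' P → Nat.card P = p ^ r := by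
    intro P hP
    have h1 := hP.card_mul
    rw [hCcard, hef, hf] at h1
    refine Nat.eq_of_mul_eq_mul_left (by positivity : 0 < e * f₀) ?_
    rw [h1]; ring
  refine ⟨hCnormal, hG₀C, hCcard, hCindex, ?_, ?_, ?_⟩
  · intro P hP
    have hPcard : Nat.card P = p ^ ((Nat.card G).factorization p) := by
      rw [hfact]; exact hcomp_card P hP
    exact ⟨Sylow.ofCard P hPcard, Sylow.coe_ofCard P hPcard⟩
  · haveI := hCnormal
    apply Subgroup.exists_right_complement'_of_coprime
    rw [hCcard, hCindex]
    exact hcop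
  · intro P hPcard
    apply Subgroup.isComplement'_of_coprime
    · rw [hCcard, hPcard, hef, hf]; ring
    · rw [hCcard, hPcard]; exact hcop
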